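/- (Peres PPT criterion) If a bipartite density matrix ρ on ℂ^m ⊗ ℂ^n is separable, i.e. a finite convex combination ρ = Σᵢ pᵢ ρᵢ ⊗ σᵢ of tensor products of density matrices, then its partial transpose ρ^{T_B} = Σᵢ pᵢ ρᵢ ⊗ σᵢᵀ is positive semidefinite. -/

import Mathlib

set_option maxHeartbeats 1000000

open Matrix Kronecker BigOperators
open scoped ComplexOrder

/-- Partial transposition on the second factor of a bipartite matrix. -/
noncomputable def ptB {m n : ℕ}
    (M : Matrix (Fin m × Fin n) (Fin m × Fin n) ℂ) :
    Matrix (Fin m × Fin n) (Fin m × Fin n) ℂ :=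
  fun p q => M (p.1, q.2) (q.1, p.2)

lemma conjTranspose_kron {m n : ℕ} (A : Matrix (Fin m) (Fin m) ℂ)
    (B : Matrix (Fin n) (Fin n) ℂ) : (A ⊗ₖ B)ᴴ = Aᴴ ⊗ₖ Bᴴ := by
  ext p q
  simp [conjTranspose_apply, kroneckerMap_apply, StarMul.star_mul, mul_comm]

lemma psd_kron {m n : ℕ} {A : Matrix (Fin m) (Fin m) ℂ}
    {B : Matrix (Fin n) (Fin n) ℂ} (hA : A.PosSemidef) (hB : B.PosSemidef) :
    (A ⊗ₖ B).PosSemidef := by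
  exact hA.kronecker hB

lemma psd_smul {N : Type*} [Fintype N] [DecidableEq N] {M : Matrix N N ℂ}
    (hM : M.PosSemidef) {c : ℝ} (hc : 0 ≤ c) : ((c : ℂ) • M).PosSemidef := by
  constructor
  · unfold Matrix.IsHermitian
    rw [conjTranspose_smul, hM.1]
    congr 1
    simp
  · exact (hM.smul (a := (c : ℂ)) (by exact_mod_cast hc)).2

theorem ppt_of_separable (m n k : ℕ) (p : Fin k → ℝ) (hp : ∀ i, 0 ≤ p i)
    (hsum : ∑ i, p i = 1)
    (ρs : Fin k → Matrix (Fin m) (Fin m) ℂ)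
    (σs : Fin k → Matrix (Fin n) (Fin n) ℂ)
    (hρs : ∀ i, (ρs i).PosSemidef) (hσs : ∀ i, (σs i).PosSemidef)
    (hρtr : ∀ i, (ρs i).trace = 1) (hσtr : ∀ i, (σs i).trace = 1)
    (ρ : Matrix (Fin m × Fin n) (Fin m × Fin n) ℂ)
    (hsep : ρ = ∑ i, (p i : ℂ) • (ρs i ⊗ₖ σs i)) :
    (ptB ρ).PosSemidef := by
  have hpt : ptB ρ = ∑ i, (p i : ℂ) • (ρs i ⊗ₖ (σs i)ᵀ) := by
    subst hsep
    ext q r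
    simp [ptB, Matrix.sum_apply, Matrix.smul_apply, kroneckerMap_apply, transpose_apply]
  rw [hpt]
  apply Finset.sum_induction _ Matrix.PosSemidef
    (fun _ _ ha hb => ha.add hb) (Matrix.PosSemidef.zero)
  intro i _
  exact psd_smul (psd_kron (hρs i) ((hσs i).transpose)) (hp i)
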